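/- Let G be a Cayley graph of a finite group H of odd order n with symmetric generating set S (not containing the identity), and suppose G is not a complete graph and its clique number ω satisfies ω > n/3. Then G is not type I; that is, its total chromatic number is at least Δ + 2, where Δ = |S| is the degree of G. -/

import Mathlib

/-- A total coloring of a simple graph `G` with colors in `Fin k`: adjacent vertices get
distinct colors, edges sharing an endpoint get distinct colors, and each edge gets a color
distinct from the colors of both its endpoints. -/
def IsTotalColoring {V : Type*} (G : SimpleGraph V) {k : ℕ}
    (cV : V → Fin k) (cE : G.edgeSet → Fin k) : Prop :=
  (∀ u v : V, G.Adj u v → cV u ≠ cV v) ∧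
  (∀ e f : G.edgeSet, e ≠ f → (∃ x, x ∈ (e : Sym2 V) ∧ x ∈ (f : Sym2 V)) → cE e ≠ cE f) ∧
  (∀ (e : G.edgeSet) (v : V), v ∈ (e : Sym2 V) → cE e ≠ cV v)

/-- The total chromatic number: the least `k` admitting a total coloring with `k` colors. -/
noncomputable def totalChromaticNumber {V : Type*} (G : SimpleGraph V) : ℕ :=
  sInf {k | ∃ (cV : V → Fin k) (cE : G.edgeSet → Fin k), IsTotalColoring G cV cE}

/-- The Cayley graph of a group `H` with connection set `S`: `g` and `h` are adjacent
iff `g ≠ h` and `g⁻¹ * h ∈ S` (or `h⁻¹ * g ∈ S`). -/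
def cayleyGraph {H : Type*} [Group H] (S : Finset H) : SimpleGraph H :=
  SimpleGraph.fromRel (fun g h => g⁻¹ * h ∈ S)

instance {H : Type*} [Group H] [DecidableEq H] (S : Finset H) :
    DecidableRel (cayleyGraph S).Adj :=
  fun a b => inferInstanceAs (Decidable (a ≠ b ∧ (a⁻¹ * b ∈ S ∨ b⁻¹ * a ∈ S)))

lemma cayley_adj {H : Type*} [Group H] [DecidableEq H] (S : Finset H)
    (hS1 : (1 : H) ∉ S) (hSsymm : ∀ s ∈ S, s⁻¹ ∈ S) (g h : H) :
    (cayleyGraph S).Adj g h ↔ g⁻¹ * h ∈ S := by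
  constructor
  · rintro ⟨hne, h1 | h2⟩
    · exact h1
    · have := hSsymm _ h2; rwa [mul_inv_rev, inv_inv] at this
  · intro hs
    refine ⟨fun he => ?_, Or.inl hs⟩
    subst he; simp at hs; exact hS1 hs

lemma cayley_degree {H : Type*} [Group H] [Fintype H] [DecidableEq H] (S : Finset H)
    (hS1 : (1 : H) ∉ S) (hSsymm : ∀ s ∈ S, s⁻¹ ∈ S) (g : H) :
    (cayleyGraph S).degree g = S.card := by
  have : (cayleyGraph S).neighborFinset g = S.image (fun s => g * s) := by
    ext h
    simp only [SimpleGraph.mem_neighborFinset, cayley_adj S hS1 hSsymm, Finset.mem_image]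
    constructor
    · intro hs; exact ⟨g⁻¹ * h, hs, by group⟩
    · rintro ⟨s, hs, rfl⟩; simpa using hs
  rw [← SimpleGraph.card_neighborFinset_eq_degree, this,
    Finset.card_image_of_injective _ (mul_right_injective g)]

lemma clique_coclique {H : Type*} [Group H] [Fintype H] [DecidableEq H] (S : Finset H)
    (hS1 : (1 : H) ∉ S) (hSsymm : ∀ s ∈ S, s⁻¹ ∈ S) (A K : Finset H)
    (hA : ∀ a ∈ A, ∀ b ∈ A, ¬ (cayleyGraph S).Adj a b)
    (hK : (cayleyGraph S).IsClique K) :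
    A.card * K.card ≤ Fintype.card H := by
  classical
  set f : H × H → H × H := fun p => (p.1 * p.2⁻¹, p.2) with hf
  set P : Finset (H × H) := (A ×ˢ K).image f with hP
  have hinj : Set.InjOn f (A ×ˢ K : Finset (H × H)) := by
    rintro ⟨a, k⟩ _ ⟨a', k'⟩ _ h
    simp only [hf, Prod.mk.injEq] at h
    obtain ⟨h1, rfl⟩ := h
    exact Prod.ext (by simpa using mul_right_cancel h1) rfl
  have hcard : P.card = A.card * K.card := by
    rw [hP, Finset.card_image_of_injOn hinj, Finset.card_product]
  have hfst : Set.InjOn Prod.fst (P : Set (H × H)) := by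
    intro p hp₁ q hp₂ hpq
    simp only [hP, Finset.coe_image, Set.mem_image, Finset.mem_coe,
      Finset.mem_product] at hp₁ hp₂
    obtain ⟨⟨a₁, k₁⟩, ⟨ha₁, hk₁⟩, rfl⟩ := hp₁
    obtain ⟨⟨a₂, k₂⟩, ⟨ha₂, hk₂⟩, rfl⟩ := hp₂
    simp only [hf] at hpq ⊢
    change a₁ * k₁⁻¹ = a₂ * k₂⁻¹ at hpq
    suffices hkk : k₁ = k₂ by
      subst hkk
      have : a₁ = a₂ := mul_right_cancel hpq
      simp [this]
    by_contra hkne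
    have hadj := hK hk₁ hk₂ hkne
    rw [cayley_adj S hS1 hSsymm] at hadj
    refine hA a₁ ha₁ a₂ ha₂ ?_
    rw [cayley_adj S hS1 hSsymm]
    have : a₁⁻¹ * a₂ = k₁⁻¹ * k₂ := by
      have h2 : a₂ = a₁ * k₁⁻¹ * k₂ := by rw [hpq]; group
      rw [h2]; group
    rwa [this]
  calc A.card * K.card = P.card := hcard.symm
    _ = (P.image Prod.fst).card := (Finset.card_image_of_injOn hfst).symm
    _ ≤ Fintype.card H := by simpa using Finset.card_le_univ _

-- trivial coloring: the set is nonempty for finite graphs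
lemma totalColoring_nonempty {V : Type*} [Fintype V] [DecidableEq V] (G : SimpleGraph V)
    [DecidableRel G.Adj] :
    {k | ∃ (cV : V → Fin k) (cE : G.edgeSet → Fin k), IsTotalColoring G cV cE}.Nonempty := by
  classical
  set n := Fintype.card V
  set m := Fintype.card G.edgeSet
  refine ⟨n + m, fun v => Fin.castAdd m (Fintype.equivFin V v),
    fun e => Fin.natAdd n (Fintype.equivFin G.edgeSet e), ?_, ?_, ?_⟩
  · intro u v huv h
    exact huv.ne ((Fintype.equivFin V).injective (Fin.val_injective (by
      simpa [Fin.ext_iff] using h)))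
  · intro e f hef _ h
    exact hef ((Fintype.equivFin G.edgeSet).injective (Fin.val_injective (by
      simpa [Fin.ext_iff] using h)))
  · intro e v _ h
    have : n + ((Fintype.equivFin G.edgeSet) e).val = ((Fintype.equivFin V) v).val := by
      simpa [Fin.ext_iff] using h
    have hlt : ((Fintype.equivFin V) v).val < n := (Fintype.equivFin V v).isLt
    omega

lemma color_cover {V : Type*} [Fintype V] [DecidableEq V] (G : SimpleGraph V)
    [DecidableRel G.Adj] {d : ℕ} (cV : V → Fin (d + 1)) (cE : G.edgeSet → Fin (d + 1))
    (h : IsTotalColoring G cV cE) (v : V) (hdeg : G.degree v = d) (i : Fin (d + 1)) :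
    cV v = i ∨ ∃ e : G.edgeSet, v ∈ (e : Sym2 V) ∧ cE e = i := by
  classical
  obtain ⟨h1, h2, h3⟩ := h
  set T := {e : G.edgeSet // v ∈ (e : Sym2 V)} with hT
  have hequiv : T ≃ G.incidenceSet v :=
    { toFun := fun e => ⟨e.1.1, e.1.2, e.2⟩
      invFun := fun w => ⟨⟨w.1, w.2.1⟩, w.2.2⟩
      left_inv := fun e => rfl
      right_inv := fun w => rfl }
  have hcardT : Fintype.card T = d := by
    rw [Fintype.card_congr hequiv]
    rw [Fintype.card_congr (Equiv.refl _)]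
    rw [G.card_incidenceSet_eq_degree, hdeg]
  set φ : Option T → Fin (d + 1) := fun o => o.elim (cV v) (fun e => cE e.1) with hφ
  have hinj : Function.Injective φ := by
    rintro (_ | e) (_ | f) hab
    · rfl
    · exact absurd hab.symm (h3 f.1 v f.2)
    · exact absurd hab (h3 e.1 v e.2)
    · by_contra hne
      have hef : e.1 ≠ f.1 := fun hh => hne (congrArg some (Subtype.ext hh))
      exact h2 e.1 f.1 hef ⟨v, e.2, f.2⟩ hab
  have hsurj : Function.Surjective φ := by
    have hcards : Fintype.card (Option T) = Fintype.card (Fin (d + 1)) := by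
      simp [hcardT]
    exact ((Fintype.bijective_iff_injective_and_card φ).2 ⟨hinj, hcards⟩).2
  obtain ⟨o, ho⟩ := hsurj i
  cases o with
  | none => exact Or.inl ho
  | some e => exact Or.inr ⟨e.1, e.2, ho⟩

theorem cayley_odd_big_clique_not_type_one {H : Type*} [Group H] [Fintype H]
    [DecidableEq H] (S : Finset H)
    (hS1 : (1 : H) ∉ S) (hSsymm : ∀ s ∈ S, s⁻¹ ∈ S)
    (hSgen : Subgroup.closure (S : Set H) = ⊤)
    (hodd : Odd (Fintype.card H))
    (hnc : cayleyGraph S ≠ ⊤)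
    (hclique : 3 * (cayleyGraph S).cliqueNum > Fintype.card H) :
    S.card + 2 ≤ totalChromaticNumber (cayleyGraph S) := by
  classical
  set G := cayleyGraph S with hG
  set d := S.card with hd
  set n := Fintype.card H with hn
  by_contra hcon
  push_neg at hcon
  have hne := totalColoring_nonempty G
  have hmem := Nat.sInf_mem hne
  obtain ⟨cV₀, cE₀, hcol₀⟩ := hmem
  have hk : totalChromaticNumber G ≤ d + 1 := by
    have : totalChromaticNumber G < d + 2 := hcon
    omega
  set cV : H → Fin (d + 1) := fun v => Fin.castLE hk (cV₀ v) with hcV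
  set cE : G.edgeSet → Fin (d + 1) := fun e => Fin.castLE hk (cE₀ e) with hcE
  obtain ⟨h1₀, h2₀, h3₀⟩ := hcol₀
  have h1 : ∀ u v : H, G.Adj u v → cV u ≠ cV v :=
    fun u v huv hh => h1₀ u v huv (Fin.castLE_injective hk hh)
  have h2 : ∀ e f : G.edgeSet, e ≠ f → (∃ x, x ∈ (e : Sym2 H) ∧ x ∈ (f : Sym2 H)) →
      cE e ≠ cE f :=
    fun e f hef hx hh => h2₀ e f hef hx (Fin.castLE_injective hk hh)
  have h3 : ∀ (e : G.edgeSet) (v : H), v ∈ (e : Sym2 H) → cE e ≠ cV v :=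
    fun e v hv hh => h3₀ e v hv (Fin.castLE_injective hk hh)
  have hcol : IsTotalColoring G cV cE := ⟨h1, h2, h3⟩
  have hdeg : ∀ v : H, G.degree v = d := cayley_degree S hS1 hSsymm
  -- color classes
  set A : Fin (d + 1) → Finset H := fun i => Finset.univ.filter (fun v => cV v = i) with hA
  set M : Fin (d + 1) → Finset G.edgeSet :=
    fun i => Finset.univ.filter (fun e => cE e = i) with hM
  set C : Fin (d + 1) → Finset H :=
    fun i => (M i).biUnion (fun e => Finset.univ.filter (· ∈ (e : Sym2 H))) with hC
  -- each edge has exactly 2 endpoints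
  have hends : ∀ e : G.edgeSet, (Finset.univ.filter (· ∈ (e : Sym2 H))).card = 2 := by
    rintro ⟨z, hz⟩
    have hnd : ¬ z.IsDiag := G.not_isDiag_of_mem_edgeSet hz
    induction z using Sym2.ind with
    | _ a b =>
      have hab : a ≠ b := by simpa [Sym2.mk_isDiag_iff] using hnd
      have : (Finset.univ.filter (· ∈ (s(a, b) : Sym2 H))) = {a, b} := by
        ext x
        simp [Sym2.mem_iff]
      simp only [this]
      exact Finset.card_pair hab
  have hCcard : ∀ i, (C i).card = 2 * (M i).card := by
    intro i
    rw [hC]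
    rw [Finset.card_biUnion]
    · rw [Finset.sum_congr rfl (fun e _ => hends e), Finset.sum_const, smul_eq_mul, mul_comm]
    · intro e he f hf hef
      rw [Function.onFun, Finset.disjoint_left]
      intro x hx hx'
      simp only [Finset.mem_filter, Finset.mem_univ, true_and] at hx hx'
      simp only [hM, Finset.mem_coe, Finset.mem_filter, Finset.mem_univ, true_and] at he hf
      exact h2 e f hef ⟨x, hx, hx'⟩ (he.trans hf.symm)
  have hunion : ∀ i, A i ∪ C i = Finset.univ := by
    intro i
    apply Finset.eq_univ_of_forall
    intro v
    rcases color_cover G cV cE hcol v (hdeg v) i with hv | ⟨e, hve, hei⟩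
    · exact Finset.mem_union_left _ (by simp [hA, hv])
    · refine Finset.mem_union_right _ ?_
      simp only [hC, Finset.mem_biUnion]
      exact ⟨e, by simp [hM, hei], by simp [hve]⟩
  have hdisj : ∀ i, Disjoint (A i) (C i) := by
    intro i
    rw [Finset.disjoint_left]
    intro x hx hx'
    simp only [hA, Finset.mem_filter, Finset.mem_univ, true_and] at hx
    simp only [hC, Finset.mem_biUnion, hM, Finset.mem_filter, Finset.mem_univ, true_and] at hx'
    obtain ⟨e, hei, hxe⟩ := hx'
    exact h3 e x hxe (hei.trans hx.symm)
  have hAcard : ∀ i, (A i).card + 2 * (M i).card = n := by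
    intro i
    rw [← hCcard i, ← Finset.card_union_of_disjoint (hdisj i), hunion i, Finset.card_univ]
  have hAodd : ∀ i, Odd (A i).card := by
    intro i
    have := hAcard i
    rw [Nat.odd_iff] at hodd ⊢
    omega
  have hAind : ∀ i, ∀ a ∈ A i, ∀ b ∈ A i, ¬ G.Adj a b := by
    intro i a ha b hb hadj
    simp only [hA, Finset.mem_filter, Finset.mem_univ, true_and] at ha hb
    exact h1 a b hadj (ha.trans hb.symm)
  obtain ⟨K, hK⟩ := G.exists_isNClique_cliqueNum
  have hA1 : ∀ i, (A i).card = 1 := by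
    intro i
    have hcc := clique_coclique S hS1 hSsymm (A i) K (hAind i) hK.isClique
    rw [hK.card_eq] at hcc
    have hlt : (A i).card < 3 := by
      by_contra hge
      push_neg at hge
      have : 3 * G.cliqueNum ≤ (A i).card * G.cliqueNum :=
        Nat.mul_le_mul_right _ hge
      omega
    have := hAodd i
    rw [Nat.odd_iff] at this
    omega
  have hsum : n = d + 1 := by
    have hfib := Finset.card_eq_sum_card_fiberwise
      (f := cV) (s := (Finset.univ : Finset H)) (t := Finset.univ)
      (fun x _ => Finset.mem_univ _)
    rw [Finset.card_univ, ← hn] at hfib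
    rw [hfib]
    calc ∑ i ∈ Finset.univ, (Finset.univ.filter fun v => cV v = i).card
        = ∑ i ∈ (Finset.univ : Finset (Fin (d + 1))), 1 := by
          exact Finset.sum_congr rfl (fun i _ => hA1 i)
      _ = d + 1 := by simp
  -- now S must be all of H minus 1, so G is complete
  apply hnc
  have hScard : S.card = n - 1 := by omega
  have hSall : S = Finset.univ.erase 1 := by
    apply Finset.eq_of_subset_of_card_le
    · intro s hs
      exact Finset.mem_erase.2 ⟨fun h => hS1 (h ▸ hs), Finset.mem_univ _⟩
    · rw [Finset.card_erase_of_mem (Finset.mem_univ _), Finset.card_univ, ← hn, hScard]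
  apply SimpleGraph.ext
  ext g h
  simp only [SimpleGraph.top_adj]
  rw [hG, cayley_adj S hS1 hSsymm, hSall]
  simp only [Finset.mem_erase, Finset.mem_univ, and_true]
  constructor
  · intro hne he; subst he; simp at hne
  · intro hne he
    apply hne
    rw [← mul_one g, ← he]
    group
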